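/- arXiv:2105.10593 — 2 statements merged into one kernel-verified Lean document; each statement's English description precedes it below -/
import Mathlib

section
/- Let (K,v) be a valued field with angular component map ac, and a,b,c ∈ K with v(a-b) = v(a-c) = v(c-b). Then ac(a-c) = ac(a-b) - ac(c-b). -/
/-- Let `(K,v)` be a valued field with angular component map `ac`,
and `a, b, c ∈ K` with `v(a-b) = v(a-c) = v(c-b)`.
Then `ac(a-c) = ac(a-b) - ac(c-b)`. -/
theorem stmt3 {K : Type*} [Field K] {Γ : Type*} [AddCommGroup Γ] [LinearOrder Γ] [IsOrderedAddMonoid Γ]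
    {k : Type*} [Field k]
    (v : AddValuation K (WithTop Γ)) (res : K → k) (ac : K → k)
    -- `res` is the residue map onto the residue field `k = Kv`:
    (hres_add : ∀ x y : K, 0 ≤ v x → 0 ≤ v y → res (x + y) = res x + res y)
    (hres_mul : ∀ x y : K, 0 ≤ v x → 0 ≤ v y → res (x * y) = res x * res y)
    (hres_one : res 1 = 1)
    (hres_eq_zero_iff : ∀ x : K, 0 ≤ v x → (res x = 0 ↔ 0 < v x))
    (hres_surj : ∀ r : k, ∃ x : K, 0 ≤ v x ∧ res x = r)
    -- `ac` is an angular component map: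
    (hac_zero : ac 0 = 0)
    (hac_mul : ∀ x y : K, ac (x * y) = ac x * ac y)
    (hac_res : ∀ x : K, v x = 0 → ac x = res x)
    (a b c : K) (h1 : v (a - b) = v (a - c)) (h2 : v (a - c) = v (c - b)) :
    ac (a - c) = ac (a - b) - ac (c - b) := by
  have hntop : ∀ x : K, x ≠ 0 → v x ≠ ⊤ := by
    intro x hx ht
    have hm := v.map_mul x x⁻¹
    rw [mul_inv_cancel₀ hx, v.map_one, ht, top_add] at hm
    exact (WithTop.top_ne_zero hm.symm).elim
  by_cases hcb : c = b
  · subst hcb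
    have hac0 : a - c = 0 := by
      by_contra hne
      exact hntop _ hne (h2.trans (by simp [v.map_zero]))
    have hab0 : a - c = 0 := hac0
    have heq : a = c := sub_eq_zero.mp hac0
    subst heq
    simp [hac_zero]
  · have hy : c - b ≠ 0 := sub_ne_zero.mpr hcb
    have hvy : v (c - b) ≠ ⊤ := hntop _ hy
    set t : K := (a - b) / (c - b) with ht
    set s : K := (a - c) / (c - b) with hs
    have hmt : v t + v (c - b) = v (c - b) := by
      rw [← v.map_mul, div_mul_cancel₀ _ hy, h1, h2]
    have hms : v s + v (c - b) = v (c - b) := by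
      rw [← v.map_mul, div_mul_cancel₀ _ hy, h2]
    have hvt : v t = 0 := WithTop.add_right_cancel hvy (by rw [hmt, zero_add])
    have hvs : v s = 0 := WithTop.add_right_cancel hvy (by rw [hms, zero_add])
    have hts : s = t - 1 := by
      rw [hs, ht, div_sub_one hy]; ring
    have hrest : res t = res s + 1 := by
      have : t = s + 1 := by rw [hts]; ring
      rw [this, hres_add s 1 (le_of_eq hvs.symm) (by rw [v.map_one]), hres_one]
    have hab : a - b = t * (c - b) := by rw [ht, div_mul_cancel₀ _ hy]
    have hac' : a - c = s * (c - b) := by rw [hs, div_mul_cancel₀ _ hy]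
    rw [hab, hac', hac_mul, hac_mul, hac_res t hvt, hac_res s hvs, hrest]
    ring
end

section
/- Let (K,v) be a valued field, (L,w) an extension, and x ∈ L. If there exists a ∈ K such that γ := w(x-a) ∈ vK is the maximum of {w(x-k) : k ∈ K}, and ac is an angular component map on L, then the residue ac(x-a) does not lie in the image of the residue field of K in Lw. -/
/-- Let `(K,v) ⊆ (L,w)` be a valued field extension with angular
component map `ac` on `L`, and `x ∈ L`. If there exists `a ∈ K` such that
`γ := w(x-a) ∈ vK` is the maximum of `{w(x-k) : k ∈ K}`, then the residue
`ac(x-a)` does not lie in the image of the residue field of `K` in `Lw`.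
(As in the paper, we may use that for every `γ ∈ vK` and nonzero `r` in the residue
field of `K` there is `b ∈ K` with `w(b) = γ` and `ac(b) = r`.) -/
theorem stmt14 {L : Type*} [Field L] {Γ : Type*} [AddCommGroup Γ] [LinearOrder Γ] [IsOrderedAddMonoid Γ]
    {k : Type*} [Field k]
    (w : AddValuation L (WithTop Γ)) (res : L → k) (ac : L → k)
    -- `res` is the residue map onto the residue field `k = Lw`:
    (hres_add : ∀ x y : L, 0 ≤ w x → 0 ≤ w y → res (x + y) = res x + res y)
    (hres_mul : ∀ x y : L, 0 ≤ w x → 0 ≤ w y → res (x * y) = res x * res y)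
    (hres_one : res 1 = 1)
    (hres_eq_zero_iff : ∀ x : L, 0 ≤ w x → (res x = 0 ↔ 0 < w x))
    (hres_surj : ∀ r : k, ∃ x : L, 0 ≤ w x ∧ res x = r)
    -- `ac` is an angular component map:
    (hac_zero : ac 0 = 0)
    (hac_mul : ∀ x y : L, ac (x * y) = ac x * ac y)
    (hac_res : ∀ x : L, w x = 0 → ac x = res x)
    (K : Subfield L) (x : L) (a : L) (ha : a ∈ K)
    -- `γ = w(x-a)` lies in `vK`:
    (hγ : ∃ u ∈ K, u ≠ 0 ∧ w u = w (x - a))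
    -- and is the maximum of `{w(x-k) : k ∈ K}`:
    (hmax : ∀ b ∈ K, w (x - b) ≤ w (x - a))
    -- Fact (orthogonality) for the subfield `K`:
    (horth : ∀ γ : WithTop Γ, (∃ u ∈ K, u ≠ 0 ∧ w u = γ) →
      ∀ r : k, r ≠ 0 → (∃ c ∈ K, 0 ≤ w c ∧ res c = r) →
      ∃ b ∈ K, w b = γ ∧ ac b = r) :
    ¬ ∃ c ∈ K, 0 ≤ w c ∧ res c = ac (x - a) := by

  rintro ⟨c, hcK, hcw, hcr⟩
  obtain ⟨u, huK, hu0, huw⟩ := hγ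
  have hxa : x - a ≠ 0 := by
    intro h
    rw [h, w.map_zero] at huw
    exact hu0 ((AddValuation.top_iff w).mp huw)
  have hac1 : ac 1 = 1 := by rw [hac_res 1 w.map_one, hres_one]
  have hacne : ∀ y : L, y ≠ 0 → ac y ≠ 0 := by
    intro y hy h
    have h1 : ac y * ac y⁻¹ = 1 := by rw [← hac_mul, mul_inv_cancel₀ hy, hac1]
    rw [h, zero_mul] at h1; exact zero_ne_one h1
  have hr : ac (x - a) ≠ 0 := hacne _ hxa
  obtain ⟨b, hbK, hbw, hbac⟩ := horth (w (x - a)) ⟨u, huK, hu0, huw⟩ _ hr ⟨c, hcK, hcw, hcr⟩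
  have hb0 : b ≠ 0 := by intro h; rw [h, hac_zero] at hbac; exact hr hbac.symm
  have hwbtop : w b ≠ ⊤ := fun h => hb0 ((AddValuation.top_iff w).mp h)
  have hwinv : w b + w b⁻¹ = 0 := by rw [← w.map_mul, mul_inv_cancel₀ hb0, w.map_one]
  have hwyb : w ((x - a) * b⁻¹) = 0 := by rw [w.map_mul, ← hbw, hwinv]
  have hacyb : ac ((x - a) * b⁻¹) = 1 := by
    rw [hac_mul, ← hbac, ← hac_mul, mul_inv_cancel₀ hb0, hac1]
  have hresyb : res ((x - a) * b⁻¹) = 1 := by rw [← hac_res _ hwyb, hacyb]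
  have hw1 : (0 : WithTop Γ) ≤ w 1 := le_of_eq w.map_one.symm
  have hwneg1 : w (-1 : L) = 0 := by rw [w.map_neg, w.map_one]
  have hres0 : res (0 : L) = 0 := by
    rw [hres_eq_zero_iff 0 (by rw [w.map_zero]; exact le_top), w.map_zero]
    exact lt_of_le_of_ne le_top (by simp)
  have hresneg1 : res (-1 : L) = -1 := by
    have h := hres_add 1 (-1) hw1 (le_of_eq hwneg1.symm)
    rw [add_neg_cancel, hres0, hres_one] at h
    linear_combination -h
  have hresdiff : res ((x - a) * b⁻¹ - 1) = 0 := by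
    have h := hres_add ((x - a) * b⁻¹) (-1) (le_of_eq hwyb.symm) (le_of_eq hwneg1.symm)
    rw [hresyb, hresneg1] at h
    rw [sub_eq_add_neg, h]; ring
  have hwdiffge : (0 : WithTop Γ) ≤ w ((x - a) * b⁻¹ - 1) := by
    have h := w.map_sub ((x - a) * b⁻¹) 1
    rw [hwyb, w.map_one] at h
    simpa using h
  have hwdiff : 0 < w ((x - a) * b⁻¹ - 1) :=
    (hres_eq_zero_iff _ hwdiffge).mp hresdiff
  have key : w (x - (a + b)) > w (x - a) := by
    have heq : x - (a + b) = b * ((x - a) * b⁻¹ - 1) := by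
      field_simp; ring
    rw [heq, w.map_mul, hbw]
    have hwxatop : w (x - a) ≠ ⊤ := hbw ▸ hwbtop
    calc w (x - a) = w (x - a) + 0 := (add_zero _).symm
      _ < w (x - a) + w ((x - a) * b⁻¹ - 1) :=
        WithTop.add_lt_add_left hwxatop hwdiff
  exact absurd (hmax (a + b) (K.add_mem ha hbK)) (not_le.mpr key)
end
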